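/- Let W be a continuous distance monoid, κ an infinite ordinal, T a κ-tree, and α : κ → W⁺ an initial sequence with 2·α(i+1) ≤ α(i) for all i < κ. Then T_α = (T ∪ Paths(T), d_{T,α}) is a Cauchy complete W-metric space, and T is a dense subset of it: every element of T ∪ Paths(T) is the limit of some Cauchy sequence with range contained in T. -/

import Mathlib

/-- A complete distance monoid: a commutative positively linearly ordered monoid whose
order is a complete linear order with least element `0`, and in which addition
distributes over infima. -/
class CompleteDistMonoid (W : Type*) extends AddCommMonoid W, CompleteLinearOrder W where
  bot_eq_zero : (⊥ : W) = 0
  add_le_add_left : ∀ a b : W, a ≤ b → ∀ c : W, c + a ≤ c + b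
  add_le_add_right : ∀ a b : W, a ≤ b → ∀ c : W, a + c ≤ b + c
  add_sInf : ∀ (A : Set W) (b : W), b + sInf A = ⨅ a ∈ A, (a + b)

/-- `W` is continuous at `0` if `0 = inf {a + b | a, b ∈ W⁺}` (where `W⁺ = W \ {0}`). -/
def ContinuousAtZero (W : Type*) [CompleteDistMonoid W] : Prop :=
  sInf {c : W | ∃ a b : W, a ≠ 0 ∧ b ≠ 0 ∧ c = a + b} = 0

/-- An initial sequence in `W` with domain the ordinal `δ`: an order-reversing map into
`W⁺ = W \ {0}` that is coinitial in `W⁺`. -/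
def IsInitialSeq {W : Type*} [Zero W] [Preorder W] (δ : Ordinal) (s : Ordinal → W) : Prop :=
  (∀ i, i < δ → s i ≠ 0) ∧
  (∀ i j : Ordinal, i ≤ j → j < δ → s j ≤ s i) ∧
  ∀ a : W, a ≠ 0 → ∃ β, β < δ ∧ s β ≤ a

/-- The coinitiality of `W`: the least ordinal that is the domain of an initial sequence. -/
noncomputable def coinit (W : Type*) [Zero W] [Preorder W] : Ordinal :=
  sInf {δ : Ordinal | ∃ s : Ordinal → W, IsInitialSeq δ s}

/-- `d` is a `W`-metric on `M`. -/
def IsWMetric {W M : Type*} [CompleteDistMonoid W] (d : M → M → W) : Prop :=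
  (∀ x y : M, max (d x y) (d y x) = 0 ↔ x = y) ∧
  ∀ x y z : M, d x z ≤ d x y + d y z

/-- `p : A → M` is a Cauchy sequence on `(M, d)`: `A ⊆ W⁺`, `inf {a + b | a, b ∈ A} = 0`
and `d (p a) (p b) ≤ a + b`.  (Values of `p` outside `A` are irrelevant.) -/
def IsCauchySeqOn {W M : Type*} [CompleteDistMonoid W] (d : M → M → W)
    (A : Set W) (p : W → M) : Prop :=
  (∀ a ∈ A, a ≠ 0) ∧
  sInf {c : W | ∃ a ∈ A, ∃ b ∈ A, c = a + b} = 0 ∧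
  ∀ a ∈ A, ∀ b ∈ A, d (p a) (p b) ≤ a + b

/-- The Cauchy sequence `p : A → M` converges to `x`. -/
def ConvergesTo {W M : Type*} [CompleteDistMonoid W] (d : M → M → W)
    (A : Set W) (p : W → M) (x : M) : Prop :=
  (⨆ a ∈ {a : W | a ≠ 0}, ⨅ b ∈ {b ∈ A | b ≤ a}, d x (p b)) = 0 ∧
  (⨆ a ∈ {a : W | a ≠ 0}, ⨅ b ∈ {b ∈ A | b ≤ a}, d (p b) x) = 0

/-- `(M, d)` is Cauchy complete: every Cauchy sequence converges to some element. -/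
def CauchyComplete {W M : Type*} [CompleteDistMonoid W] (d : M → M → W) : Prop :=
  ∀ (A : Set W) (p : W → M), IsCauchySeqOn d A p → ∃ x : M, ConvergesTo d A p x

/-- The distance `d_C` between two Cauchy sequences. -/
noncomputable def dC {W M : Type*} [CompleteDistMonoid W] (d : M → M → W)
    (A : Set W) (p : W → M) (B : Set W) (q : W → M) : W :=
  ⨆ c ∈ {c : W | c ≠ 0}, ⨅ a ∈ {a ∈ A | a ≤ c}, ⨅ b ∈ {b ∈ B | b ≤ c}, d (p a) (q b)

/-- Equivalence of Cauchy sequences: `p ≡ q` iff `d_C(p,q) = 0` and `d_C(q,p) = 0`. -/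
def CEquiv {W M : Type*} [CompleteDistMonoid W] (d : M → M → W)
    (A : Set W) (p : W → M) (B : Set W) (q : W → M) : Prop :=
  dC d A p B q = 0 ∧ dC d B q A p = 0

/-- `T` (with level function `lev`) is a `κ`-tree: a partial order with a unique minimal
element in which the set of predecessors of any element is a chain mapped
order-isomorphically by `lev` onto an ordinal below `κ` (its order type). -/
structure IsTree {T : Type*} [PartialOrder T] (κ : Ordinal) (lev : T → Ordinal) : Prop where
  root : ∃! r : T, IsMin r
  chainBelow : ∀ a b c : T, b < a → c < a → b < c ∨ b = c ∨ c < b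
  lev_lt : ∀ a : T, lev a < κ
  lev_strictMono : ∀ a b : T, a < b → lev a < lev b
  lev_surjOn : ∀ a : T, ∀ i, i < lev a → ∃ b, b < a ∧ lev b = i

/-- A `κ`-tree is pruned if every element has extensions to all higher levels below `κ`. -/
def IsPruned {T : Type*} [PartialOrder T] (κ : Ordinal) (lev : T → Ordinal) : Prop :=
  ∀ a : T, ∀ β, β < κ → lev a < β → ∃ b : T, a ≤ b ∧ lev b = β

/-- A path through a `κ`-tree: a strictly increasing selection of one node of each
level `γ < κ`. -/
def IsPath {T : Type*} [PartialOrder T] (κ : Ordinal) (lev : T → Ordinal)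
    (p : {γ : Ordinal // γ < κ} → T) : Prop :=
  (∀ γ, lev (p γ) = γ.1) ∧ ∀ γ δ : {γ : Ordinal // γ < κ}, γ < δ → p γ < p δ

/-- The set of paths through the tree. -/
def PathT {T : Type*} [PartialOrder T] (κ : Ordinal) (lev : T → Ordinal) :=
  {p : {γ : Ordinal // γ < κ} → T // IsPath κ lev p}

/-- `c ∈ T` lies below a point of `T ∪ Paths(T)`. -/
def BelowX {T : Type*} [PartialOrder T] (κ : Ordinal) (lev : T → Ordinal)
    (c : T) : T ⊕ PathT κ lev → Prop
  | .inl t => c ≤ t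
  | .inr p => ∃ γ, p.1 γ = c

/-- `join(u, v)`: the supremum of the levels of common lower bounds in `T`. -/
noncomputable def joinX {T : Type*} [PartialOrder T] (κ : Ordinal) (lev : T → Ordinal)
    (u v : T ⊕ PathT κ lev) : Ordinal :=
  sSup (lev '' {c : T | BelowX κ lev c u ∧ BelowX κ lev c v})

open Classical in
/-- The distance `d_{T,α}` on `T ∪ Paths(T)`:  `α (join u v)` for `u ≠ v`, and `0` on the
diagonal. -/
noncomputable def dTree {W T : Type*} [CompleteDistMonoid W] [PartialOrder T]
    (κ : Ordinal) (lev : T → Ordinal) (α : Ordinal → W)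
    (u v : T ⊕ PathT κ lev) : W :=
  if u = v then 0 else α (joinX κ lev u v)
section MonoidLemmas
variable {W : Type*} [CompleteDistMonoid W]

lemma wzero_le (a : W) : 0 ≤ a := by
  rw [← CompleteDistMonoid.bot_eq_zero]; exact bot_le

lemma weq_zero {a : W} (h : a ≤ 0) : a = 0 := le_antisymm h (wzero_le a)

lemma wle_add_right (a b : W) : a ≤ a + b := by
  have := CompleteDistMonoid.add_le_add_left (0:W) b (wzero_le b) a
  simpa using this

lemma wle_add_left (a b : W) : a ≤ b + a := by
  have := CompleteDistMonoid.add_le_add_right (0:W) b (wzero_le b) a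
  simpa using this

lemma wadd_le_add {a b c d : W} (h1 : a ≤ b) (h2 : c ≤ d) : a + c ≤ b + d :=
  le_trans (CompleteDistMonoid.add_le_add_right a b h1 c)
    (CompleteDistMonoid.add_le_add_left c d h2 b)

lemma wexists_lt {S : Set W} (h : sInf S = 0) {c : W} (hc : c ≠ 0) :
    ∃ s ∈ S, s < c := by
  by_contra hcon
  push_neg at hcon
  exact hc (weq_zero (h ▸ le_sInf fun s hs => hcon s hs))

lemma wpos_inf (hW : ContinuousAtZero W) : sInf {a : W | a ≠ 0} = 0 := by
  apply weq_zero
  have : sInf {a : W | a ≠ 0} ≤ sInf {c : W | ∃ a b : W, a ≠ 0 ∧ b ≠ 0 ∧ c = a + b} := by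
    apply le_sInf
    rintro c ⟨a, b, ha, hb, rfl⟩
    exact le_trans (sInf_le ha) (wle_add_right a b)
  rw [hW] at this
  exact this

lemma weq_zero_of_forall_le (hW : ContinuousAtZero W) {x : W}
    (h : ∀ c : W, c ≠ 0 → x ≤ c) : x = 0 := by
  apply weq_zero
  rw [← wpos_inf hW]
  exact le_sInf fun c hc => h c hc

lemma wmin_ne_zero {a b : W} (ha : a ≠ 0) (hb : b ≠ 0) : min a b ≠ 0 :=
  (lt_min ((wzero_le a).lt_of_ne (Ne.symm ha)) ((wzero_le b).lt_of_ne (Ne.symm hb))).ne'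

end MonoidLemmas

section TreeLemmas
variable {T : Type*} [PartialOrder T] {κ : Ordinal} {lev : T → Ordinal}

lemma comp_below (ht : IsTree κ lev) {a b c : T} (hb : b ≤ a) (hc : c ≤ a) :
    b ≤ c ∨ c ≤ b := by
  rcases eq_or_lt_of_le hb with rfl | hb
  · exact Or.inr hc
  rcases eq_or_lt_of_le hc with rfl | hc
  · exact Or.inl hb.le
  rcases ht.chainBelow a b c hb hc with h | h | h
  · exact Or.inl h.le
  · exact Or.inl h.le
  · exact Or.inr h.le

lemma eq_of_below (ht : IsTree κ lev) {a b c : T} (hb : b ≤ a) (hc : c ≤ a)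
    (hl : lev b = lev c) : b = c := by
  rcases comp_below ht hb hc with h | h
  · rcases eq_or_lt_of_le h with rfl | h
    · rfl
    · exact absurd (ht.lev_strictMono _ _ h) (by simp [hl])
  · rcases eq_or_lt_of_le h with rfl | h
    · rfl
    · exact absurd (ht.lev_strictMono _ _ h) (by simp [hl])

lemma root_le (ht : IsTree κ lev) : ∃ r : T, lev r = 0 ∧ ∀ a, r ≤ a := by
  obtain ⟨r, hr, hru⟩ := ht.root
  have hmin : ∀ b : T, lev b = 0 → IsMin b := by
    intro b hb0
    intro c hc
    rcases eq_or_lt_of_le hc with rfl | hc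
    · exact le_rfl
    · exact absurd (ht.lev_strictMono _ _ hc) (by simp [hb0])
  have hr0 : lev r = 0 := by
    by_contra h0
    obtain ⟨b, hb, hbl⟩ := ht.lev_surjOn r 0 (pos_iff_ne_zero.2 h0)
    exact absurd hb (LE.le.not_gt (hr hb.le))
  refine ⟨r, hr0, fun a => ?_⟩
  by_cases ha : lev a = 0
  · exact le_of_eq (hru a (hmin a ha)).symm
  · obtain ⟨b, hb, hbl⟩ := ht.lev_surjOn a 0 (pos_iff_ne_zero.2 ha)
    exact (hru b (hmin b hbl)) ▸ hb.le

end TreeLemmas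
section BelowLemmas
variable {T : Type*} [PartialOrder T] {κ : Ordinal} {lev : T → Ordinal}

lemma path_le {q : PathT κ lev} {γ δ : {γ : Ordinal // γ < κ}} (h : γ.1 ≤ δ.1) :
    q.1 γ ≤ q.1 δ := by
  rcases eq_or_lt_of_le h with h | h
  · exact le_of_eq (congrArg q.1 (Subtype.ext h))
  · exact (q.2.2 γ δ (Subtype.mk_lt_mk.2 h)).le

lemma belowX_mono (ht : IsTree κ lev) {c c' : T} {u : T ⊕ PathT κ lev}
    (hcc : c' ≤ c) (h : BelowX κ lev c u) : BelowX κ lev c' u := by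
  cases u with
  | inl t => exact le_trans hcc h
  | inr q =>
    obtain ⟨γ, hγ⟩ := h
    rcases eq_or_lt_of_le hcc with rfl | hlt
    · exact ⟨γ, hγ⟩
    have hlc : lev c = γ.1 := by rw [← hγ]; exact q.2.1 γ
    have hlev : lev c' < γ.1 := hlc ▸ ht.lev_strictMono _ _ hlt
    refine ⟨⟨lev c', hlev.trans γ.2⟩, ?_⟩
    have h1 : q.1 ⟨lev c', hlev.trans γ.2⟩ < c := by
      rw [← hγ]; exact q.2.2 _ γ (Subtype.mk_lt_mk.2 hlev)
    exact eq_of_below ht h1.le hlt.le (q.2.1 _)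

lemma belowX_unique (ht : IsTree κ lev) {t t' : T} {u : T ⊕ PathT κ lev}
    (h1 : BelowX κ lev t u) (h2 : BelowX κ lev t' u) (hl : lev t = lev t') : t = t' := by
  cases u with
  | inl s => exact eq_of_below ht h1 h2 hl
  | inr q =>
    obtain ⟨γ, hγ⟩ := h1
    obtain ⟨δ, hδ⟩ := h2
    have : γ = δ := by
      apply Subtype.ext
      rw [← q.2.1 γ, ← q.2.1 δ, hγ, hδ, hl]
    rw [← hγ, ← hδ, this]

lemma belowX_comp (ht : IsTree κ lev) {c c' : T} {u : T ⊕ PathT κ lev}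
    (h1 : BelowX κ lev c u) (h2 : BelowX κ lev c' u) : c ≤ c' ∨ c' ≤ c := by
  cases u with
  | inl t => exact comp_below ht h1 h2
  | inr q =>
    obtain ⟨γ, hγ⟩ := h1
    obtain ⟨δ, hδ⟩ := h2
    rcases le_total γ.1 δ.1 with h | h
    · exact Or.inl (hγ ▸ hδ ▸ path_le h)
    · exact Or.inr (hδ ▸ hγ ▸ path_le h)

lemma belowX_root (ht : IsTree κ lev) (hκ0 : 0 < κ) {r : T} (hr0 : lev r = 0)
    (hr : ∀ a, r ≤ a) (u : T ⊕ PathT κ lev) : BelowX κ lev r u := by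
  cases u with
  | inl t => exact hr t
  | inr q =>
    refine ⟨⟨0, hκ0⟩, ?_⟩
    exact eq_of_below ht le_rfl (hr _) (by rw [q.2.1, hr0])

lemma joinS_nonempty (ht : IsTree κ lev) (hκ0 : 0 < κ) (u v : T ⊕ PathT κ lev) :
    (lev '' {c : T | BelowX κ lev c u ∧ BelowX κ lev c v}).Nonempty := by
  obtain ⟨r, hr0, hr⟩ := root_le ht
  exact ⟨lev r, r, ⟨belowX_root ht hκ0 hr0 hr u, belowX_root ht hκ0 hr0 hr v⟩, rfl⟩

lemma joinS_bdd (ht : IsTree κ lev) (u v : T ⊕ PathT κ lev) :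
    BddAbove (lev '' {c : T | BelowX κ lev c u ∧ BelowX κ lev c v}) := by
  refine ⟨κ, ?_⟩
  rintro x ⟨c, _, rfl⟩
  exact (ht.lev_lt c).le

lemma le_joinX (ht : IsTree κ lev) {c : T} {u v : T ⊕ PathT κ lev}
    (h1 : BelowX κ lev c u) (h2 : BelowX κ lev c v) : lev c ≤ joinX κ lev u v :=
  le_csSup (joinS_bdd ht u v) ⟨c, ⟨h1, h2⟩, rfl⟩

lemma exists_of_lt_joinX (ht : IsTree κ lev) (hκ0 : 0 < κ) {u v : T ⊕ PathT κ lev}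
    {γ : Ordinal} (h : γ < joinX κ lev u v) :
    ∃ c : T, BelowX κ lev c u ∧ BelowX κ lev c v ∧ γ < lev c := by
  by_contra hcon
  push_neg at hcon
  have : joinX κ lev u v ≤ γ := by
    apply csSup_le (joinS_nonempty ht hκ0 u v)
    rintro x ⟨c, ⟨h1, h2⟩, rfl⟩
    exact hcon c h1 h2
  exact absurd h (LE.le.not_gt this)

lemma lev_le_of_below {c t : T} (ht : IsTree κ lev) (h : c ≤ t) : lev c ≤ lev t := by
  rcases eq_or_lt_of_le h with rfl | h
  · exact le_rfl
  · exact (ht.lev_strictMono _ _ h).le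

lemma joinX_lt (ht : IsTree κ lev) (hκ0 : 0 < κ) {u v : T ⊕ PathT κ lev}
    (hne : u ≠ v) : joinX κ lev u v < κ := by
  have hbound : ∀ t : T, (∀ c : T, BelowX κ lev c u ∧ BelowX κ lev c v → lev c ≤ lev t) →
      joinX κ lev u v < κ := by
    intro t hb
    refine lt_of_le_of_lt ?_ (ht.lev_lt t)
    apply csSup_le (joinS_nonempty ht hκ0 u v)
    rintro x ⟨c, hc, rfl⟩
    exact hb c hc
  cases u with
  | inl t => exact hbound t fun c hc => lev_le_of_below ht hc.1
  | inr p =>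
    cases v with
    | inl t => exact hbound t fun c hc => lev_le_of_below ht hc.2
    | inr q =>
      have hpq : p.1 ≠ q.1 := fun h => hne (congrArg Sum.inr (Subtype.ext h))
      obtain ⟨γ₀, h₀⟩ := Function.ne_iff.mp hpq
      have hb : ∀ c : T, BelowX κ lev c (Sum.inr p) ∧ BelowX κ lev c (Sum.inr q) →
          lev c ≤ γ₀.1 := by
        rintro c ⟨⟨γ, hγ⟩, ⟨δ, hδ⟩⟩
        by_contra hlev
        push_neg at hlev
        have hlcγ : lev c = γ.1 := by rw [← hγ]; exact p.2.1 γ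
        have hlcδ : lev c = δ.1 := by rw [← hδ]; exact q.2.1 δ
        have h1 : p.1 γ₀ < c := by
          rw [← hγ]; exact p.2.2 γ₀ γ (Subtype.mk_lt_mk.2 (hlcγ ▸ hlev))
        have h2 : q.1 γ₀ < c := by
          rw [← hδ]; exact q.2.2 γ₀ δ (Subtype.mk_lt_mk.2 (hlcδ ▸ hlev))
        exact h₀ (eq_of_below ht h1.le h2.le (by rw [p.2.1, q.2.1]))
      refine lt_of_le_of_lt ?_ γ₀.2
      apply csSup_le (joinS_nonempty ht hκ0 _ _)
      rintro x ⟨c, hc, rfl⟩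
      exact hb c hc

end BelowLemmas
section DTreeLemmas
variable {W T : Type*} [CompleteDistMonoid W] [PartialOrder T]
  {κ : Ordinal} {lev : T → Ordinal} {α : Ordinal → W}

lemma dTree_self (u : T ⊕ PathT κ lev) : dTree (W := W) κ lev α u u = 0 := by
  simp [dTree]

lemma dTree_eq_of_ne {u v : T ⊕ PathT κ lev} (h : u ≠ v) :
    dTree (W := W) κ lev α u v = α (joinX κ lev u v) := by
  simp [dTree, h]

lemma joinX_comm (u v : T ⊕ PathT κ lev) : joinX κ lev u v = joinX κ lev v u := by
  unfold joinX
  have h : {c : T | BelowX κ lev c u ∧ BelowX κ lev c v} = {c : T | BelowX κ lev c v ∧ BelowX κ lev c u} := by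
    ext c; exact and_comm
  rw [h]

lemma dTree_comm (u v : T ⊕ PathT κ lev) :
    dTree (W := W) κ lev α u v = dTree (W := W) κ lev α v u := by
  by_cases h : u = v
  · subst h; rfl
  · rw [dTree_eq_of_ne h, dTree_eq_of_ne (Ne.symm h), joinX_comm]

lemma dTree_ne_zero (ht : IsTree κ lev) (hκ0 : 0 < κ) (hα : IsInitialSeq κ α)
    {u v : T ⊕ PathT κ lev} (h : u ≠ v) : dTree (W := W) κ lev α u v ≠ 0 := by
  rw [dTree_eq_of_ne h]
  exact hα.1 _ (joinX_lt ht hκ0 h)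

lemma dTree_le_alpha (ht : IsTree κ lev) (hκ0 : 0 < κ) (hα : IsInitialSeq κ α)
    {u v : T ⊕ PathT κ lev} {γ : Ordinal} (h : u = v ∨ γ ≤ joinX κ lev u v) :
    dTree (W := W) κ lev α u v ≤ α γ := by
  rcases h with rfl | h
  · rw [dTree_self]; exact wzero_le _
  by_cases huv : u = v
  · subst huv; rw [dTree_self]; exact wzero_le _
  rw [dTree_eq_of_ne huv]
  exact hα.2.1 γ _ h (joinX_lt ht hκ0 huv)

lemma lt_joinX_of_dTree_lt (ht : IsTree κ lev) (hκ0 : 0 < κ) (hα : IsInitialSeq κ α)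
    {u v : T ⊕ PathT κ lev} {γ : Ordinal} (hγ : γ < κ) (hne : u ≠ v)
    (h : dTree (W := W) κ lev α u v < α γ) : γ < joinX κ lev u v := by
  by_contra hcon
  push_neg at hcon
  have := hα.2.1 _ γ hcon hγ
  rw [← dTree_eq_of_ne (α := α) hne] at this
  exact absurd h (LE.le.not_gt this)

lemma dTree_triangle (ht : IsTree κ lev) (hκ0 : 0 < κ) (hα : IsInitialSeq κ α)
    (u v w : T ⊕ PathT κ lev) :
    dTree (W := W) κ lev α u w ≤ dTree (W := W) κ lev α u v + dTree (W := W) κ lev α v w := by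
  by_cases huw : u = w
  · subst huw; rw [dTree_self]; exact wzero_le _
  by_cases huv : u = v
  · subst huv; rw [dTree_self]; simpa using wle_add_left _ _
  by_cases hvw : v = w
  · subst hvw; rw [dTree_self]; simpa using wle_add_right _ _
  -- main case
  have key : joinX κ lev u v ≤ joinX κ lev u w ∨ joinX κ lev v w ≤ joinX κ lev u w := by
    rcases le_total (joinX κ lev u v) (joinX κ lev v w) with h12 | h21
    · left
      apply csSup_le (joinS_nonempty ht hκ0 u v)
      rintro x ⟨c, ⟨hcu, hcv⟩, rfl⟩
      by_cases hex : ∃ c' : T, (BelowX κ lev c' v ∧ BelowX κ lev c' w) ∧ c ≤ c'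
      · obtain ⟨c', ⟨_, hc'w⟩, hcc'⟩ := hex
        exact le_joinX ht hcu (belowX_mono ht hcc' hc'w)
      · push_neg at hex
        have h2 : joinX κ lev v w ≤ joinX κ lev u w := by
          apply csSup_le (joinS_nonempty ht hκ0 v w)
          rintro x ⟨c', ⟨hc'v, hc'w⟩, rfl⟩
          have hle : c' ≤ c := by
            rcases belowX_comp ht hcv hc'v with h | h
            · exact absurd h (hex c' ⟨hc'v, hc'w⟩)
            · exact h
          exact le_joinX ht (belowX_mono ht hle hcu) hc'w
        calc lev c ≤ joinX κ lev u v := le_joinX ht hcu hcv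
          _ ≤ joinX κ lev v w := h12
          _ ≤ joinX κ lev u w := h2
    · right
      apply csSup_le (joinS_nonempty ht hκ0 v w)
      rintro x ⟨c, ⟨hcv, hcw⟩, rfl⟩
      by_cases hex : ∃ c' : T, (BelowX κ lev c' u ∧ BelowX κ lev c' v) ∧ c ≤ c'
      · obtain ⟨c', ⟨hc'u, _⟩, hcc'⟩ := hex
        exact le_joinX ht (belowX_mono ht hcc' hc'u) hcw
      · push_neg at hex
        have h2 : joinX κ lev u v ≤ joinX κ lev u w := by
          apply csSup_le (joinS_nonempty ht hκ0 u v)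
          rintro x ⟨c', ⟨hc'u, hc'v⟩, rfl⟩
          have hle : c' ≤ c := by
            rcases belowX_comp ht hcv hc'v with h | h
            · exact absurd h (hex c' ⟨hc'u, hc'v⟩)
            · exact h
          exact le_joinX ht hc'u (belowX_mono ht hle hcw)
        calc lev c ≤ joinX κ lev v w := le_joinX ht hcv hcw
          _ ≤ joinX κ lev u v := h21
          _ ≤ joinX κ lev u w := h2
  rcases key with h | h
  · refine le_trans (le_trans (dTree_le_alpha ht hκ0 hα (Or.inr h)) ?_) (wle_add_right _ _)
    rw [dTree_eq_of_ne huv]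
  · refine le_trans (le_trans (dTree_le_alpha ht hκ0 hα (Or.inr h)) ?_) (wle_add_left _ _)
    rw [dTree_eq_of_ne hvw]
end DTreeLemmas
section Convergence
variable {W M : Type*} [CompleteDistMonoid W]

lemma convergesTo_of (hW : ContinuousAtZero W) (d : M → M → W) (A : Set W) (p : W → M)
    (x : M)
    (h : ∀ a' : W, a' ≠ 0 → ∀ c : W, c ≠ 0 →
      ∃ b ∈ A, b ≤ a' ∧ d x (p b) ≤ c ∧ d (p b) x ≤ c) :
    ConvergesTo d A p x := by
  constructor
  · apply weq_zero
    apply iSup₂_le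
    intro a ha
    rw [← wpos_inf hW]
    apply le_sInf
    intro c hc
    obtain ⟨b, hbA, hba, h1, _⟩ := h a ha c hc
    exact le_trans (iInf₂_le b ⟨hbA, hba⟩) h1
  · apply weq_zero
    apply iSup₂_le
    intro a ha
    rw [← wpos_inf hW]
    apply le_sInf
    intro c hc
    obtain ⟨b, hbA, hba, _, h2⟩ := h a ha c hc
    exact le_trans (iInf₂_le b ⟨hbA, hba⟩) h2

end Convergence
section Complete
variable {W T : Type*} [CompleteDistMonoid W] [PartialOrder T]
  {κ : Ordinal} {lev : T → Ordinal} {α : Ordinal → W}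

lemma dTree_cauchyComplete (hW : ContinuousAtZero W) (hκ0 : 0 < κ)
    (ht : IsTree κ lev) (hα : IsInitialSeq κ α) :
    CauchyComplete (dTree (W := W) κ lev α) := by
  rintro A p ⟨hA1, hA2, hA3⟩
  have hsmall : ∀ c : W, c ≠ 0 → ∃ a ∈ A, ∃ b ∈ A, a + b < c := by
    intro c hc
    obtain ⟨s, hs, hlt⟩ := wexists_lt hA2 hc
    obtain ⟨a, ha, b, hb, rfl⟩ := hs
    exact ⟨a, ha, b, hb, hlt⟩
  have hmem : ∀ c : W, c ≠ 0 → ∃ a ∈ A, a ≤ c := by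
    intro c hc
    obtain ⟨a, ha, b, hb, hab⟩ := hsmall c hc
    exact ⟨a, ha, ((wle_add_right a b).trans hab.le)⟩
  by_cases hconst : ∃ x : T ⊕ PathT κ lev, ∃ ε : W, ε ≠ 0 ∧ ∀ a ∈ A, a ≤ ε → p a = x
  · obtain ⟨x, ε, hε, hx⟩ := hconst
    refine ⟨x, convergesTo_of hW _ A p x ?_⟩
    intro a' ha' c hc
    obtain ⟨b, hbA, hble⟩ := hmem (min a' ε) (wmin_ne_zero ha' hε)
    refine ⟨b, hbA, hble.trans (min_le_left _ _), ?_, ?_⟩ <;>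
      rw [hx b hbA (hble.trans (min_le_right _ _))] <;>
      · rw [dTree_self]; exact wzero_le c
  · push_neg at hconst
    have key : ∀ γ : Ordinal, γ < κ → ∃ (t : T) (ε : W), ε ≠ 0 ∧ lev t = γ ∧
        ∀ a ∈ A, a ≤ ε → BelowX κ lev t (p a) := by
      intro γ hγ
      obtain ⟨a₀, ha₀, b₀, hb₀, hab⟩ := hsmall (α γ) (hα.1 γ hγ)
      obtain ⟨a₁, ha₁A, ha₁le, ha₁ne⟩ := hconst (p a₀) b₀ (hA1 b₀ hb₀)
      have hd : dTree (W := W) κ lev α (p a₀) (p a₁) < α γ :=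
        lt_of_le_of_lt (hA3 a₀ ha₀ a₁ ha₁A)
          (lt_of_le_of_lt (wadd_le_add le_rfl ha₁le) hab)
      have hj : γ < joinX κ lev (p a₀) (p a₁) :=
        lt_joinX_of_dTree_lt ht hκ0 hα hγ (Ne.symm ha₁ne) hd
      obtain ⟨c₀, hc₀u, hc₀v, hc₀lev⟩ := exists_of_lt_joinX ht hκ0 hj
      obtain ⟨t, htlt, htlev⟩ := ht.lev_surjOn c₀ γ hc₀lev
      refine ⟨t, min a₀ b₀, wmin_ne_zero (hA1 _ ha₀) (hA1 _ hb₀), htlev, ?_⟩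
      intro a haA hale
      by_cases hpa : p a = p a₀
      · rw [hpa]; exact belowX_mono ht htlt.le hc₀u
      · have hd' : dTree (W := W) κ lev α (p a₀) (p a) < α γ :=
          lt_of_le_of_lt (hA3 a₀ ha₀ a haA)
            (lt_of_le_of_lt (wadd_le_add le_rfl (hale.trans (min_le_right _ _))) hab)
        have hj' : γ < joinX κ lev (p a₀) (p a) :=
          lt_joinX_of_dTree_lt ht hκ0 hα hγ (Ne.symm hpa) hd'
        obtain ⟨c₁, hc₁u, hc₁v, hc₁lev⟩ := exists_of_lt_joinX ht hκ0 hj'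
        obtain ⟨t', ht'lt, ht'lev⟩ := ht.lev_surjOn c₁ γ hc₁lev
        have htt : t' = t :=
          belowX_unique ht (belowX_mono ht ht'lt.le hc₁u)
            (belowX_mono ht htlt.le hc₀u) (by rw [ht'lev, htlev])
        rw [← htt]
        exact belowX_mono ht ht'lt.le hc₁v
    choose t ε hε hlevt hbelow using key
    have hpath : IsPath κ lev (fun γ : {γ : Ordinal // γ < κ} => t γ.1 γ.2) := by
      constructor
      · intro γ; exact hlevt γ.1 γ.2
      · intro γ δ hγδ
        obtain ⟨a, haA, hale⟩ := hmem (min (ε γ.1 γ.2) (ε δ.1 δ.2))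
          (wmin_ne_zero (hε γ.1 γ.2) (hε δ.1 δ.2))
        have h1 : BelowX κ lev (t γ.1 γ.2) (p a) :=
          hbelow γ.1 γ.2 a haA (hale.trans (min_le_left _ _))
        have h2 : BelowX κ lev (t δ.1 δ.2) (p a) :=
          hbelow δ.1 δ.2 a haA (hale.trans (min_le_right _ _))
        have hlevlt : lev (t γ.1 γ.2) < lev (t δ.1 δ.2) := by
          rw [hlevt, hlevt]; exact hγδ
        rcases belowX_comp ht h1 h2 with h | h
        · exact h.lt_of_ne (fun he => absurd (he ▸ hlevlt) (lt_irrefl _))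
        · exact absurd (lev_le_of_below ht h) (LT.lt.not_ge hlevlt)
    refine ⟨Sum.inr ⟨_, hpath⟩, convergesTo_of hW _ A p _ ?_⟩
    intro a' ha' c hc
    obtain ⟨β, hβ, hαβ⟩ := hα.2.2 c hc
    obtain ⟨b, hbA, hble⟩ := hmem (min a' (ε β hβ)) (wmin_ne_zero ha' (hε β hβ))
    refine ⟨b, hbA, hble.trans (min_le_left _ _), ?_, ?_⟩
    · by_cases hpb : Sum.inr (⟨_, hpath⟩ : PathT κ lev) = p b
      · rw [← hpb]; exact (dTree_self _).trans_le (wzero_le c)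
      refine le_trans (dTree_le_alpha ht hκ0 hα (Or.inr ?_)) hαβ
      have hb1 : BelowX κ lev (t β hβ) (Sum.inr (⟨_, hpath⟩ : PathT κ lev)) := ⟨⟨β, hβ⟩, rfl⟩
      have hb2 : BelowX κ lev (t β hβ) (p b) :=
        hbelow β hβ b hbA (hble.trans (min_le_right _ _))
      have := le_joinX ht hb1 hb2
      rwa [hlevt β hβ] at this
    · by_cases hpb : p b = Sum.inr (⟨_, hpath⟩ : PathT κ lev)
      · rw [hpb]; exact (dTree_self _).trans_le (wzero_le c)
      refine le_trans (dTree_le_alpha ht hκ0 hα (Or.inr ?_)) hαβ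
      have hb1 : BelowX κ lev (t β hβ) (Sum.inr (⟨_, hpath⟩ : PathT κ lev)) := ⟨⟨β, hβ⟩, rfl⟩
      have hb2 : BelowX κ lev (t β hβ) (p b) :=
        hbelow β hβ b hbA (hble.trans (min_le_right _ _))
      have := le_joinX ht hb2 hb1
      rwa [hlevt β hβ] at this
end Complete
section Dense
variable {W T : Type*} [CompleteDistMonoid W] [PartialOrder T]
  {κ : Ordinal} {lev : T → Ordinal} {α : Ordinal → W}

lemma dense_inf_sums (hW : ContinuousAtZero W) (hα : IsInitialSeq κ α) :
    sInf {c : W | ∃ a ∈ α '' Set.Iio κ, ∃ b ∈ α '' Set.Iio κ, c = a + b} = 0 := by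
  apply weq_zero
  have hle : sInf {c : W | ∃ a ∈ α '' Set.Iio κ, ∃ b ∈ α '' Set.Iio κ, c = a + b} ≤
      sInf {c : W | ∃ a b : W, a ≠ 0 ∧ b ≠ 0 ∧ c = a + b} := by
    apply le_sInf
    rintro c ⟨a, b, ha, hb, rfl⟩
    obtain ⟨β, hβ, hβa⟩ := hα.2.2 a ha
    obtain ⟨β', hβ', hβ'b⟩ := hα.2.2 b hb
    exact le_trans (sInf_le ⟨α β, ⟨β, hβ, rfl⟩, α β', ⟨β', hβ', rfl⟩, rfl⟩)
      (wadd_le_add hβa hβ'b)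
  rw [hW] at hle; exact hle

lemma dTree_dense (hW : ContinuousAtZero W) (hκ0 : 0 < κ)
    (ht : IsTree κ lev) (hα : IsInitialSeq κ α) :
    ∀ u : T ⊕ PathT κ lev, ∃ (A : Set W) (p : W → T ⊕ PathT κ lev),
      IsCauchySeqOn (dTree κ lev α) A p ∧
      (∀ a ∈ A, ∃ t : T, p a = Sum.inl t) ∧
      ConvergesTo (dTree κ lev α) A p u := by
  intro u
  have hA1 : ∀ a ∈ α '' Set.Iio κ, a ≠ 0 := by
    rintro a ⟨β, hβ, rfl⟩; exact hα.1 β hβ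
  have hmem : ∀ c : W, c ≠ 0 → ∃ b ∈ α '' Set.Iio κ, b ≤ c := by
    intro c hc
    obtain ⟨β, hβ, h⟩ := hα.2.2 c hc
    exact ⟨α β, ⟨β, hβ, rfl⟩, h⟩
  cases u with
  | inl t₀ =>
    refine ⟨α '' Set.Iio κ, fun _ => Sum.inl t₀,
      ⟨hA1, dense_inf_sums hW hα, ?_⟩, fun a _ => ⟨t₀, rfl⟩, ?_⟩
    · intro a _ b _; rw [dTree_self]; exact wzero_le _
    · apply convergesTo_of hW
      intro a' ha' c hc
      obtain ⟨b, hbA, hble⟩ := hmem a' ha'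
      exact ⟨b, hbA, hble, by rw [dTree_self]; exact wzero_le c,
        by rw [dTree_self]; exact wzero_le c⟩
  | inr q =>
    classical
    set p : W → T ⊕ PathT κ lev := fun w =>
      if h : w ∈ α '' Set.Iio κ then Sum.inl (q.1 ⟨h.choose, h.choose_spec.1⟩)
      else Sum.inl (q.1 ⟨0, hκ0⟩) with hp
    have hval : ∀ a ∈ α '' Set.Iio κ, ∃ γ : {γ : Ordinal // γ < κ},
        p a = Sum.inl (q.1 γ) ∧ α γ.1 = a := by
      intro a ha
      refine ⟨⟨ha.choose, ha.choose_spec.1⟩, ?_, ha.choose_spec.2⟩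
      simp only [hp, dif_pos ha]
    have hbelow : ∀ γ : {γ : Ordinal // γ < κ},
        BelowX κ lev (q.1 γ) (Sum.inr q : T ⊕ PathT κ lev) := fun γ => ⟨γ, rfl⟩
    have hdle : ∀ γ δ : {γ : Ordinal // γ < κ}, γ.1 ≤ δ.1 →
        dTree (W := W) κ lev α (Sum.inl (q.1 γ)) (Sum.inl (q.1 δ)) ≤ α γ.1 := by
      intro γ δ hγδ
      refine dTree_le_alpha ht hκ0 hα (Or.inr ?_)
      have h1 : BelowX κ lev (q.1 γ) (Sum.inl (q.1 γ) : T ⊕ PathT κ lev) := le_rfl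
      have h2 : BelowX κ lev (q.1 γ) (Sum.inl (q.1 δ) : T ⊕ PathT κ lev) := path_le hγδ
      have := le_joinX ht h1 h2
      rwa [q.2.1 γ] at this
    refine ⟨α '' Set.Iio κ, p, ⟨hA1, dense_inf_sums hW hα, ?_⟩, ?_, ?_⟩
    · intro a haA b hbA
      obtain ⟨γa, hpa, hαa⟩ := hval a haA
      obtain ⟨γb, hpb, hαb⟩ := hval b hbA
      rw [hpa, hpb]
      rcases le_total γa.1 γb.1 with h | h
      · exact le_trans (hdle γa γb h) (hαa ▸ wle_add_right a b)
      · rw [dTree_comm]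
        exact le_trans (hdle γb γa h) (hαb ▸ wle_add_left b a)
    · intro a haA
      obtain ⟨γa, hpa, _⟩ := hval a haA
      exact ⟨q.1 γa, hpa⟩
    · apply convergesTo_of hW
      intro a' ha' c hc
      obtain ⟨b, hbA, hble⟩ := hmem (min c a') (wmin_ne_zero hc ha')
      obtain ⟨γb, hpb, hαb⟩ := hval b hbA
      have hd : dTree (W := W) κ lev α (Sum.inr q) (p b) ≤ c := by
        rw [hpb]
        refine le_trans (dTree_le_alpha ht hκ0 hα (Or.inr ?_))
          (by rw [hαb]; exact hble.trans (min_le_left _ _))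
        have h2 : BelowX κ lev (q.1 γb) (Sum.inl (q.1 γb) : T ⊕ PathT κ lev) := le_rfl
        have := le_joinX ht (hbelow γb) h2
        rwa [q.2.1 γb] at this
      refine ⟨b, hbA, hble.trans (min_le_right _ _), hd, ?_⟩
      rw [dTree_comm]; exact hd
end Dense
section Metric
variable {W T : Type*} [CompleteDistMonoid W] [PartialOrder T]
  {κ : Ordinal} {lev : T → Ordinal} {α : Ordinal → W}

lemma dTree_isWMetric (hκ0 : 0 < κ) (ht : IsTree κ lev) (hα : IsInitialSeq κ α) :
    IsWMetric (dTree (W := W) κ lev α) := by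
  constructor
  · intro x y
    constructor
    · intro h
      by_contra hne
      have h1 : dTree (W := W) κ lev α x y = 0 :=
        weq_zero (le_trans (le_max_left _ _) h.le)
      exact dTree_ne_zero ht hκ0 hα hne h1
    · rintro rfl
      rw [dTree_self]
      simp
  · exact dTree_triangle ht hκ0 hα
end Metric

/-- For a `κ`-tree `T` and a nice initial sequence `α` (with `2 • α (i+1) ≤ α i`), the
space `T_α = (T ∪ Paths(T), d_{T,α})` is a Cauchy complete `W`-metric space and `T` is
dense in it: every point is the limit of a Cauchy sequence with values in `T`. -/
theorem stmt15 {W T : Type*} [CompleteDistMonoid W] [PartialOrder T]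
    (hW : ContinuousAtZero W)
    (κ : Ordinal) (hκ : Ordinal.omega0 ≤ κ)
    (lev : T → Ordinal) (ht : IsTree κ lev)
    (α : Ordinal → W) (hα : IsInitialSeq κ α)
    (hα2 : ∀ i, i < κ → 2 • α (i + 1) ≤ α i) :
    IsWMetric (dTree (W := W) κ lev α) ∧
    CauchyComplete (dTree (W := W) κ lev α) ∧
    ∀ u : T ⊕ PathT κ lev, ∃ (A : Set W) (p : W → T ⊕ PathT κ lev),
      IsCauchySeqOn (dTree κ lev α) A p ∧
      (∀ a ∈ A, ∃ t : T, p a = Sum.inl t) ∧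
      ConvergesTo (dTree κ lev α) A p u := by

  have hκ0 : (0 : Ordinal) < κ := lt_of_lt_of_le Ordinal.omega0_pos hκ
  exact ⟨dTree_isWMetric hκ0 ht hα, dTree_cauchyComplete hW hκ0 ht hα,
    dTree_dense hW hκ0 ht hα⟩
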